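/- For all locally compact groups G₁ and G₂, c_ub(G₁ × G₂) = min{c_ub(G₁), c_ub(G₂)}, where G₁ × G₂ carries the product topology. -/

import Mathlib

open scoped ENNReal
open MeasureTheory

structure HilbRep (G : Type*) [Group G] [TopologicalSpace G] where
  (space : Type*)
  [normedAddCommGroup : NormedAddCommGroup space]
  [innerProductSpace : InnerProductSpace ℂ space]
  [completeSpace : CompleteSpace space]
  toFun : G →* (space →L[ℂ] space)ˣ

attribute [instance] HilbRep.normedAddCommGroup HilbRep.innerProductSpace HilbRep.completeSpace

namespace HilbRep

variable {G : Type*} [Group G] [TopologicalSpace G]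

/-- The bounded invertible operator associated to a group element. -/
def op (π : HilbRep G) (s : G) : π.space →L[ℂ] π.space :=
  (π.toFun s : π.space →L[ℂ] π.space)

/-- The representation is uniformly bounded by `c`. -/
def IsUB (π : HilbRep G) (c : ℝ) : Prop := ∀ s : G, ‖π.op s‖ ≤ c

/-- The representation is continuous for the strong operator topology. -/
def IsSOTContinuous (π : HilbRep G) : Prop :=
  ∀ ξ : π.space, Continuous fun s : G => π.op s ξ

/-- `π ∈ R_c(G)`: strongly continuous and uniformly bounded by `c`. -/
def IsRc (π : HilbRep G) (c : ℝ) : Prop := π.IsUB c ∧ π.IsSOTContinuous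

/-- `π` almost has invariant vectors. -/
def AlmostInvariantVectors (π : HilbRep G) : Prop :=
  ∀ Q : Set G, IsCompact Q → ∀ ε : ℝ, 0 < ε →
    ∃ ξ : π.space, ∀ s ∈ Q, ‖π.op s ξ - ξ‖ < ε * ‖ξ‖

/-- `π` has a nonzero invariant vector. -/
def HasInvariantVector (π : HilbRep G) : Prop :=
  ∃ ξ : π.space, ξ ≠ 0 ∧ ∀ s : G, π.op s ξ = ξ

end HilbRep

universe u v

/-- Property (T)_c. -/
def HasPropertyT (G : Type u) [Group G] [TopologicalSpace G] (c : ℝ) : Prop :=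
  ∀ π : HilbRep.{u, v} G, π.IsRc c → π.AlmostInvariantVectors → π.HasInvariantVector

open Classical in
/-- The constant `c_ub(G) ∈ [1, ∞]`. -/
noncomputable def cUB (G : Type u) [Group G] [TopologicalSpace G] : ℝ≥0∞ :=
  if HasPropertyT.{u, v} G 1 then
    ⨆ (c : ℝ) (_ : 1 ≤ c ∧ HasPropertyT.{u, v} G c), ENNReal.ofReal c
  else 1

section AuxCUB

open HilbRep

variable {G₁ : Type u} {G₂ : Type u} [Group G₁] [TopologicalSpace G₁]
  [Group G₂] [TopologicalSpace G₂]

theorem hasPropertyT_anti {G : Type u} [Group G] [TopologicalSpace G] {c c' : ℝ}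
    (hcc' : c ≤ c') (h : HasPropertyT.{u, v} G c') : HasPropertyT.{u, v} G c :=
  fun π hRc => h π ⟨fun s => (hRc.1 s).trans hcc', hRc.2⟩

theorem hasPropertyT_fst {c : ℝ} (h : HasPropertyT.{u, v} (G₁ × G₂) c) :
    HasPropertyT.{u, v} G₁ c := by
  intro π hRc hAIV
  let π' : HilbRep (G₁ × G₂) :=
    { space := π.space, toFun := π.toFun.comp (MonoidHom.fst G₁ G₂) }
  have hop : ∀ s : G₁ × G₂, π'.op s = π.op s.1 := fun s => rfl
  have h1 : π'.IsRc c := by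
    refine ⟨fun s => ?_, fun ξ => ?_⟩
    · rw [hop]; exact hRc.1 s.1
    · exact (hRc.2 ξ).comp continuous_fst
  have h2 : π'.AlmostInvariantVectors := by
    intro Q hQ ε hε
    obtain ⟨ξ, hξ⟩ := hAIV (Prod.fst '' Q) (hQ.image continuous_fst) ε hε
    exact ⟨ξ, fun s hs => hξ s.1 ⟨s, hs, rfl⟩⟩
  obtain ⟨ξ, hne, hfix⟩ := h π' h1 h2
  exact ⟨ξ, hne, fun g => hfix (g, 1)⟩

theorem hasPropertyT_snd {c : ℝ} (h : HasPropertyT.{u, v} (G₁ × G₂) c) :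
    HasPropertyT.{u, v} G₂ c := by
  intro π hRc hAIV
  let π' : HilbRep (G₁ × G₂) :=
    { space := π.space, toFun := π.toFun.comp (MonoidHom.snd G₁ G₂) }
  have hop : ∀ s : G₁ × G₂, π'.op s = π.op s.2 := fun s => rfl
  have h1 : π'.IsRc c := by
    refine ⟨fun s => ?_, fun ξ => ?_⟩
    · rw [hop]; exact hRc.1 s.2
    · exact (hRc.2 ξ).comp continuous_snd
  have h2 : π'.AlmostInvariantVectors := by
    intro Q hQ ε hε
    obtain ⟨ξ, hξ⟩ := hAIV (Prod.snd '' Q) (hQ.image continuous_snd) ε hε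
    exact ⟨ξ, fun s hs => hξ s.2 ⟨s, hs, rfl⟩⟩
  obtain ⟨ξ, hne, hfix⟩ := h π' h1 h2
  exact ⟨ξ, hne, fun g => hfix (1, g)⟩

end AuxCUB
section HardCUB

open HilbRep

variable {G₁ : Type u} {G₂ : Type u} [Group G₁] [TopologicalSpace G₁]
  [Group G₂] [TopologicalSpace G₂]

set_option maxHeartbeats 1000000 in
theorem hasPropertyT_prod {c : ℝ} (hc : 1 ≤ c) (hT1 : HasPropertyT.{u, v} G₁ c)
    (hT2 : HasPropertyT.{u, v} G₂ c) : HasPropertyT.{u, v} (G₁ × G₂) c := by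
  intro π hRc hAIV
  obtain ⟨hUB, hSOT⟩ := hRc
  have hc0 : (0 : ℝ) ≤ c := le_trans zero_le_one hc
  -- basic operator identities
  have op_mul : ∀ (s t : G₁ × G₂) (x : π.space), π.op (s * t) x = π.op s (π.op t x) := by
    intro s t x
    simp only [HilbRep.op, map_mul, Units.val_mul, ContinuousLinearMap.mul_apply]
  have op_one : ∀ x : π.space, π.op 1 x = x := by
    intro x
    simp only [HilbRep.op, map_one, Units.val_one, ContinuousLinearMap.one_apply]
  have op_norm : ∀ (s : G₁ × G₂) (x : π.space), ‖π.op s x‖ ≤ c * ‖x‖ := fun s x =>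
    ((π.op s).le_opNorm x).trans (mul_le_mul_of_nonneg_right (hUB s) (norm_nonneg x))
  -- the subspace of `G₁`-invariant vectors
  let V : Submodule ℂ π.space :=
    { carrier := {x | ∀ g : G₁, π.op (g, 1) x = x}
      add_mem' := fun ha hb => fun g => by simp only [map_add, ha g, hb g]
      zero_mem' := fun g => by simp only [map_zero]
      smul_mem' := fun r x hx => fun g => by
        simp only [Set.mem_setOf_eq] at hx ⊢
        rw [_root_.map_smul, hx g] }
  have hVmem : ∀ {x : π.space}, x ∈ V ↔ ∀ g : G₁, π.op (g, 1) x = x := Iff.rfl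
  have hVclosed : IsClosed (V : Set π.space) := by
    have : (V : Set π.space) = ⋂ g : G₁, {x | π.op (g, 1) x = x} := by
      ext x; simp only [Set.mem_iInter]; exact hVmem
    rw [this]
    exact isClosed_iInter fun g => isClosed_eq (π.op (g, 1)).continuous continuous_id
  haveI : CompleteSpace V := hVclosed.completeSpace_coe
  haveI : CompleteSpace ↥Vᗮ := V.isClosed_orthogonal.completeSpace_coe
  -- V is invariant under π(1, h)
  have hVinv : ∀ (h : G₂) (x : π.space), x ∈ V → π.op (1, h) x ∈ V := by
    intro h x hx g
    show π.op (g, 1) (π.op (1, h) x) = π.op (1, h) x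
    rw [← op_mul, show ((g : G₁), (1 : G₂)) * (1, h) = ((1 : G₁), h) * (g, 1) by
      simp [Prod.ext_iff], op_mul, hx g]
  -- the projections
  set P := Submodule.orthogonalProjectionOnto Vᗮ with hPdef
  set Q := Submodule.orthogonalProjectionOnto V with hQdef
  let σ : G₁ → (↥Vᗮ →L[ℂ] ↥Vᗮ) := fun g => P.comp ((π.op (g, 1)).comp Vᗮ.subtypeL)
  have σ_apply : ∀ (g : G₁) (η : ↥Vᗮ), σ g η = P (π.op (g, 1) ↑η) := fun g η => rfl
  have hPV : ∀ x : π.space, x ∈ V → P x = 0 := fun x hx =>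
    Submodule.orthogonalProjectionOnto_orthogonal_apply_eq_zero hx
  have hdec : ∀ x : π.space, (↑(Q x) : π.space) + ↑(P x) = x := fun x =>
    V.starProjection_add_starProjection_orthogonal x
  have hPnorm : ∀ y : π.space, ‖P y‖ ≤ ‖y‖ := by
    intro y
    calc ‖P y‖ ≤ ‖P‖ * ‖y‖ := P.le_opNorm _
      _ ≤ 1 * ‖y‖ := mul_le_mul_of_nonneg_right (Submodule.orthogonalProjectionOnto_norm_le _) (norm_nonneg _)
      _ = ‖y‖ := one_mul _
  have hproj : ∀ (g : G₁) (x : π.space), P (π.op (g, 1) x) = σ g (P x) := by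
    intro g x
    conv_lhs => rw [← hdec x]
    rw [map_add, hVmem.mp (Q x).2 g, map_add, hPV _ (Q x).2, zero_add]
    exact (σ_apply g (P x)).symm
  have σ_mul : ∀ g g' : G₁, (σ g).comp (σ g') = σ (g * g') := by
    intro g g'
    refine ContinuousLinearMap.ext fun η => ?_
    show σ g (σ g' η) = σ (g * g') η
    rw [σ_apply g', ← hproj, ← op_mul, show ((g : G₁), (1 : G₂)) * (g', 1) = (g * g', 1) by
      simp [Prod.ext_iff], σ_apply]
  have σ_one : σ 1 = ContinuousLinearMap.id ℂ ↥Vᗮ := by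
    refine ContinuousLinearMap.ext fun η => ?_
    show P (π.op ((1 : G₁), (1 : G₂)) ↑η) = η
    rw [show ((1 : G₁), (1 : G₂)) = (1 : G₁ × G₂) from rfl, op_one]
    exact Submodule.orthogonalProjectionOnto_mem_subspace_eq_self η
  let σU : G₁ →* (↥Vᗮ →L[ℂ] ↥Vᗮ)ˣ :=
    { toFun := fun g =>
        { val := σ g
          inv := σ g⁻¹
          val_inv := by rw [ContinuousLinearMap.mul_def, σ_mul, mul_inv_cancel, σ_one]; rfl
          inv_val := by rw [ContinuousLinearMap.mul_def, σ_mul, inv_mul_cancel, σ_one]; rfl }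
      map_one' := Units.ext (by show σ 1 = 1; rw [σ_one]; rfl)
      map_mul' := fun g g' => Units.ext (by
        show σ (g * g') = σ g * σ g'
        rw [ContinuousLinearMap.mul_def, σ_mul]) }
  let σRep : HilbRep G₁ := { space := ↥Vᗮ, toFun := σU }
  have σRep_op : ∀ g : G₁, σRep.op g = σ g := fun g => rfl
  have hσRc : σRep.IsRc c := by
    constructor
    · intro g
      rw [σRep_op]
      refine ContinuousLinearMap.opNorm_le_bound _ hc0 fun η => ?_
      rw [σ_apply]
      exact (hPnorm _).trans (op_norm _ _)
    · intro η
      simp only [σRep_op, σ_apply]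
      exact P.continuous.comp ((hSOT ↑η).comp (continuous_id.prodMk continuous_const))
  -- σRep has no nonzero invariant vector
  have hσnoInv : ¬ σRep.HasInvariantVector := by
    rintro ⟨η, hne, hfix⟩
    have hfixP : ∀ g : G₁, P (π.op (g, 1) ↑η) = η := fun g => hfix g
    set f : G₁ → π.space := fun g => π.op (g, 1) ↑η - ↑η with hf
    have hfV : ∀ g : G₁, f g ∈ V := by
      intro g
      have hy := hdec (π.op (g, 1) ↑η)
      rw [hfixP g] at hy
      have hQy : (↑(Q (π.op (g, 1) ↑η)) : π.space) = π.op (g, 1) ↑η - ↑η := by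
        rw [eq_sub_iff_add_eq]; exact hy
      have hfe : f g = ↑(Q (π.op (g, 1) ↑η)) := by rw [hQy]
      rw [hfe]; exact (Q _).2
    have hcoc : ∀ g g' : G₁, f (g * g') = f g' + f g := by
      intro g g'
      have h1 : π.op ((g * g' : G₁), (1 : G₂)) ↑η = π.op (g, 1) (π.op (g', 1) ↑η) := by
        rw [← op_mul]; congr 1; simp [Prod.ext_iff]
      have h2 : π.op ((g' : G₁), (1 : G₂)) ↑η = f g' + ↑η := (sub_add_cancel _ _).symm
      calc f (g * g') = π.op ((g * g' : G₁), (1 : G₂)) ↑η - ↑η := rfl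
        _ = π.op (g, 1) (f g' + ↑η) - ↑η := by rw [h1, h2]
        _ = π.op (g, 1) (f g') + π.op (g, 1) ↑η - ↑η := by rw [map_add]
        _ = f g' + (π.op (g, 1) ↑η - ↑η) := by rw [hVmem.mp (hfV g') g]; abel
        _ = f g' + f g := rfl
    have hpow : ∀ (n : ℕ) (g : G₁), f (g ^ n) = n • f g := by
      intro n g
      induction n with
      | zero =>
          rw [pow_zero, zero_smul]
          show π.op ((1 : G₁), (1 : G₂)) ↑η - ↑η = 0
          rw [show ((1 : G₁), (1 : G₂)) = (1 : G₁ × G₂) from rfl, op_one, sub_self]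
      | succ n ih => rw [pow_succ, hcoc, ih, succ_nsmul]; abel
    have hbd : ∀ g : G₁, ‖f g‖ ≤ c * ‖(↑η : π.space)‖ + ‖(↑η : π.space)‖ := fun g =>
      (norm_sub_le _ _).trans (add_le_add (op_norm _ _) le_rfl)
    have hfzero : ∀ g : G₁, f g = 0 := by
      intro g
      by_contra hne0
      have hpos : 0 < ‖f g‖ := norm_pos_iff.mpr hne0
      obtain ⟨n, hn⟩ := exists_nat_gt ((c * ‖(↑η : π.space)‖ + ‖(↑η : π.space)‖) / ‖f g‖)
      have he : ‖f (g ^ n)‖ = n * ‖f g‖ := by rw [hpow, ← Nat.cast_smul_eq_nsmul ℝ, norm_smul, Real.norm_natCast]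
      have h2 := hbd (g ^ n)
      rw [he] at h2
      have : ((c * ‖(↑η : π.space)‖ + ‖(↑η : π.space)‖) / ‖f g‖) ≥ (n : ℝ) := by
        rw [ge_iff_le, le_div_iff₀ hpos]; linarith
      linarith
    have hηV : (↑η : π.space) ∈ V := by
      intro g
      have h := hfzero g
      rw [hf] at h
      simpa only [sub_eq_zero] using h
    have hzero : (↑η : π.space) = 0 := by
      have horth := η.2
      rw [Submodule.mem_orthogonal] at horth
      have := horth _ hηV
      rwa [inner_self_eq_zero] at this
    exact hne (Subtype.ext hzero)
  -- extract the spectral gap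
  have hgap : ∃ K₀ : Set G₁, IsCompact K₀ ∧ ∃ δ : ℝ, 0 < δ ∧
      ∀ η : ↥Vᗮ, ∃ g ∈ K₀, δ * ‖η‖ ≤ ‖σ g η - η‖ := by
    have hnA : ¬ σRep.AlmostInvariantVectors := fun hA => hσnoInv (hT1 σRep hσRc hA)
    unfold HilbRep.AlmostInvariantVectors at hnA
    push_neg at hnA
    obtain ⟨K₀, hK₀, δ, hδ, hg⟩ := hnA
    exact ⟨K₀, hK₀, δ, hδ, fun η => by
      obtain ⟨g, hgm, hge⟩ := hg η
      exact ⟨g, hgm, hge⟩⟩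
  obtain ⟨K₀, hK₀c, δ, hδ, hgap⟩ := hgap
  -- the representation ρ of G₂ on V
  let ρ : G₂ → (↥V →L[ℂ] ↥V) := fun h =>
    ((π.op (1, h)).comp V.subtypeL).codRestrict V (fun x => hVinv h ↑x x.2)
  have ρ_apply : ∀ (h : G₂) (x : ↥V), (↑(ρ h x) : π.space) = π.op (1, h) ↑x := fun h x => rfl
  have ρ_mul : ∀ h h' : G₂, (ρ h).comp (ρ h') = ρ (h * h') := by
    intro h h'
    refine ContinuousLinearMap.ext fun x => Subtype.ext ?_
    show (↑(ρ h (ρ h' x)) : π.space) = ↑(ρ (h * h') x)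
    rw [ρ_apply, ρ_apply, ρ_apply, ← op_mul]
    congr 2
    simp [Prod.ext_iff]
  have ρ_one : ρ 1 = ContinuousLinearMap.id ℂ ↥V := by
    refine ContinuousLinearMap.ext fun x => Subtype.ext ?_
    show (↑(ρ 1 x) : π.space) = ↑x
    rw [ρ_apply, show ((1 : G₁), (1 : G₂)) = (1 : G₁ × G₂) from rfl, op_one]
  let ρU : G₂ →* (↥V →L[ℂ] ↥V)ˣ :=
    { toFun := fun h =>
        { val := ρ h
          inv := ρ h⁻¹
          val_inv := by rw [ContinuousLinearMap.mul_def, ρ_mul, mul_inv_cancel, ρ_one]; rfl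
          inv_val := by rw [ContinuousLinearMap.mul_def, ρ_mul, inv_mul_cancel, ρ_one]; rfl }
      map_one' := Units.ext (by show ρ 1 = 1; rw [ρ_one]; rfl)
      map_mul' := fun h h' => Units.ext (by
        show ρ (h * h') = ρ h * ρ h'
        rw [ContinuousLinearMap.mul_def, ρ_mul]) }
  let ρRep : HilbRep G₂ := { space := ↥V, toFun := ρU }
  have ρRep_op : ∀ h : G₂, ρRep.op h = ρ h := fun h => rfl
  have hρRc : ρRep.IsRc c := by
    constructor
    · intro h
      rw [ρRep_op]
      refine ContinuousLinearMap.opNorm_le_bound _ hc0 fun x => ?_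
      have he : ‖ρ h x‖ = ‖π.op ((1 : G₁), h) (↑x : π.space)‖ := rfl
      rw [he]
      exact op_norm _ _
    · intro x
      show Continuous fun h : G₂ => ρRep.op h x
      have : ∀ h : G₂, ρRep.op h x = ρ h x := fun h => rfl
      simp only [this]
      exact Continuous.subtype_mk
        ((hSOT ↑x).comp (continuous_const.prodMk continuous_id)) _
  -- ρRep almost has invariant vectors
  have hρAIV : ρRep.AlmostInvariantVectors := by
    intro Qc hQc ε hε
    set D : ℝ := δ + c + 1 with hD
    have hDpos : 0 < D := by positivity
    set ε' : ℝ := min (δ / 2) (ε * δ / (2 * D)) with hε'def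
    have hε'pos : 0 < ε' := lt_min (by positivity) (by positivity)
    have hε'δ : ε' ≤ δ / 2 := min_le_left _ _
    have hε'D : ε' * D ≤ ε * δ / 2 := by
      calc ε' * D ≤ (ε * δ / (2 * D)) * D := by
            exact mul_le_mul_of_nonneg_right (min_le_right _ _) hDpos.le
        _ = ε * δ / 2 := by field_simp
    obtain ⟨ξ, hξ⟩ := hAIV ((insert 1 K₀) ×ˢ (insert 1 Qc))
      ((hK₀c.insert 1).prod (hQc.insert 1)) ε' hε'pos
    have hξ1 : ∀ g ∈ K₀, ‖π.op (g, 1) ξ - ξ‖ < ε' * ‖ξ‖ := fun g hg =>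
      hξ (g, 1) ⟨Set.mem_insert_of_mem _ hg, Set.mem_insert _ _⟩
    have hξ2 : ∀ h ∈ Qc, ‖π.op (1, h) ξ - ξ‖ < ε' * ‖ξ‖ := fun h hh =>
      hξ (1, h) ⟨Set.mem_insert _ _, Set.mem_insert_of_mem _ hh⟩
    have hξpos : 0 < ‖ξ‖ := by
      have h := hξ (1, 1) ⟨Set.mem_insert _ _, Set.mem_insert _ _⟩
      rw [show ((1 : G₁), (1 : G₂)) = (1 : G₁ × G₂) from rfl, op_one, sub_self, norm_zero] at h
      nlinarith [norm_nonneg ξ, hε'pos]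
    obtain ⟨g, hgK, hgge⟩ := hgap (P ξ)
    have hkey : σ g (P ξ) - P ξ = P (π.op (g, 1) ξ - ξ) := by
      conv_rhs => rw [map_sub]
      rw [hproj]
    have hp : δ * ‖P ξ‖ < ε' * ‖ξ‖ := by
      calc δ * ‖P ξ‖ ≤ ‖σ g (P ξ) - P ξ‖ := hgge
        _ = ‖P (π.op (g, 1) ξ - ξ)‖ := by rw [hkey]
        _ ≤ ‖π.op (g, 1) ξ - ξ‖ := hPnorm _
        _ < ε' * ‖ξ‖ := hξ1 g hgK
    refine ⟨Q ξ, fun h hh => ?_⟩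
    have hcoeq : (↑(Q ξ) : π.space) = ξ - ↑(P ξ) := eq_sub_iff_add_eq.mpr (hdec ξ)
    have hnormP : ‖(↑(P ξ) : π.space)‖ = ‖P ξ‖ := rfl
    have hnormQ : ‖Q ξ‖ = ‖(↑(Q ξ) : π.space)‖ := rfl
    have hnq : ‖ξ‖ - ‖P ξ‖ ≤ ‖Q ξ‖ := by
      rw [hnormQ, hcoeq, ← hnormP]
      exact norm_sub_norm_le _ _
    have hval : (↑(ρRep.op h (Q ξ)) : π.space) - ↑(Q ξ) =
        (π.op (1, h) ξ - ξ) - (π.op (1, h) ↑(P ξ) - ↑(P ξ)) := by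
      have h1 : (↑(ρRep.op h (Q ξ)) : π.space) = π.op (1, h) ↑(Q ξ) := rfl
      rw [h1, hcoeq, map_sub]
      abel
    have hbound : ‖ρRep.op h (Q ξ) - Q ξ‖ < ε' * ‖ξ‖ + (c + 1) * ‖P ξ‖ := by
      have he : ‖ρRep.op h (Q ξ) - Q ξ‖ = ‖(↑(ρRep.op h (Q ξ)) : π.space) - ↑(Q ξ)‖ := rfl
      rw [he, hval]
      calc ‖(π.op (1, h) ξ - ξ) - (π.op (1, h) (↑(P ξ) : π.space) - ↑(P ξ))‖
          ≤ ‖π.op (1, h) ξ - ξ‖ + ‖π.op (1, h) (↑(P ξ) : π.space) - ↑(P ξ)‖ := norm_sub_le _ _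
        _ ≤ ‖π.op (1, h) ξ - ξ‖ + (‖π.op (1, h) (↑(P ξ) : π.space)‖ + ‖(↑(P ξ) : π.space)‖) := by
            have := norm_sub_le (π.op (1, h) (↑(P ξ) : π.space)) (↑(P ξ) : π.space)
            linarith
        _ < ε' * ‖ξ‖ + (c * ‖(↑(P ξ) : π.space)‖ + ‖(↑(P ξ) : π.space)‖) := by
            have h1 := hξ2 h hh
            have h2 := op_norm ((1 : G₁), h) (↑(P ξ) : π.space)
            linarith
        _ = ε' * ‖ξ‖ + (c + 1) * ‖P ξ‖ := by rw [hnormP]; ring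
    have hPhalf : ‖P ξ‖ < ‖ξ‖ / 2 := by
      have h8 : δ * ‖P ξ‖ < (δ / 2) * ‖ξ‖ :=
        hp.trans_le (mul_le_mul_of_nonneg_right hε'δ (norm_nonneg ξ))
      have h9 : δ * ‖P ξ‖ = δ * ‖P ξ‖ := rfl
      nlinarith [hδ]
    have hq2 : ‖ξ‖ / 2 < ‖Q ξ‖ := by linarith
    have h4 : (ε' * ‖ξ‖ + (c + 1) * ‖P ξ‖) * δ ≤ ((ε / 2) * ‖ξ‖) * δ := by
      have h1 : (c + 1) * (δ * ‖P ξ‖) ≤ (c + 1) * (ε' * ‖ξ‖) := by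
        have : (0 : ℝ) ≤ c + 1 := by linarith
        exact mul_le_mul_of_nonneg_left hp.le this
      have h3 : ε' * ‖ξ‖ * δ + (c + 1) * (ε' * ‖ξ‖) = ε' * D * ‖ξ‖ := by rw [hD]; ring
      have h5 : ε' * D * ‖ξ‖ ≤ (ε * δ / 2) * ‖ξ‖ :=
        mul_le_mul_of_nonneg_right hε'D (norm_nonneg ξ)
      have hr1 : (ε' * ‖ξ‖ + (c + 1) * ‖P ξ‖) * δ = ε' * ‖ξ‖ * δ + (c + 1) * (δ * ‖P ξ‖) := by
        ring
      have hr2 : ((ε / 2) * ‖ξ‖) * δ = (ε * δ / 2) * ‖ξ‖ := by ring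
      linarith
    have h5 : ε' * ‖ξ‖ + (c + 1) * ‖P ξ‖ ≤ (ε / 2) * ‖ξ‖ := le_of_mul_le_mul_right h4 hδ
    have hfinal : (ε / 2) * ‖ξ‖ < ε * ‖Q ξ‖ := by
      have h6 : ε * (‖ξ‖ / 2) < ε * ‖Q ξ‖ := mul_lt_mul_of_pos_left hq2 hε
      have h7 : ε * (‖ξ‖ / 2) = (ε / 2) * ‖ξ‖ := by ring
      linarith
    linarith
  -- conclude
  obtain ⟨w, hwne, hwfix⟩ := hT2 ρRep hρRc hρAIV
  refine ⟨↑w, ?_, ?_⟩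
  · simpa using hwne
  · intro s
    have hs : s = ((s.1, 1) : G₁ × G₂) * (1, s.2) := by simp [Prod.ext_iff]
    have h1 : π.op (1, s.2) ↑w = ↑w := by
      have h2 := congrArg Subtype.val (hwfix s.2)
      rwa [ρRep_op, ρ_apply] at h2
    rw [hs, op_mul, h1]
    exact w.2 s.1

end HardCUB
section FinalCUB

theorem one_le_cUB (G : Type u) [Group G] [TopologicalSpace G] : 1 ≤ cUB.{u, v} G := by
  unfold cUB
  split
  · rename_i hT
    have h := le_iSup₂ (f := fun (c : ℝ) (_ : 1 ≤ c ∧ HasPropertyT.{u, v} G c) =>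
      ENNReal.ofReal c) 1 ⟨le_refl 1, hT⟩
    simpa [ENNReal.ofReal_one] using h
  · exact le_refl 1

theorem iSup_min_aux {P₁ P₂ : ℝ → Prop}
    (h₁ : ∀ c c' : ℝ, 1 ≤ c → c ≤ c' → P₁ c' → P₁ c)
    (h₂ : ∀ c c' : ℝ, 1 ≤ c → c ≤ c' → P₂ c' → P₂ c) :
    (⨆ (c : ℝ) (_ : 1 ≤ c ∧ (P₁ c ∧ P₂ c)), ENNReal.ofReal c) =
      min (⨆ (c : ℝ) (_ : 1 ≤ c ∧ P₁ c), ENNReal.ofReal c)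
        (⨆ (c : ℝ) (_ : 1 ≤ c ∧ P₂ c), ENNReal.ofReal c) := by
  apply le_antisymm
  · refine le_min ?_ ?_
    · exact iSup₂_le fun c hc => le_iSup₂ (f := fun (c : ℝ) (_ : 1 ≤ c ∧ P₁ c) =>
        ENNReal.ofReal c) c ⟨hc.1, hc.2.1⟩
    · exact iSup₂_le fun c hc => le_iSup₂ (f := fun (c : ℝ) (_ : 1 ≤ c ∧ P₂ c) =>
        ENNReal.ofReal c) c ⟨hc.1, hc.2.2⟩
  · refine le_of_forall_lt fun x hx => ?_
    rw [lt_min_iff] at hx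
    obtain ⟨hx1, hx2⟩ := hx
    rw [lt_iSup_iff] at hx1 hx2
    obtain ⟨c₁, hc₁⟩ := hx1
    obtain ⟨c₂, hc₂⟩ := hx2
    rw [lt_iSup_iff] at hc₁ hc₂
    obtain ⟨⟨hc₁1, hc₁P⟩, hxc₁⟩ := hc₁
    obtain ⟨⟨hc₂1, hc₂P⟩, hxc₂⟩ := hc₂
    have hmin1 : (1 : ℝ) ≤ min c₁ c₂ := le_min hc₁1 hc₂1
    have hP1 : P₁ (min c₁ c₂) := h₁ _ c₁ hmin1 (min_le_left _ _) hc₁P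
    have hP2 : P₂ (min c₁ c₂) := h₂ _ c₂ hmin1 (min_le_right _ _) hc₂P
    have hlt : x < ENNReal.ofReal (min c₁ c₂) := by
      rcases le_total c₁ c₂ with h | h
      · rwa [min_eq_left h]
      · rwa [min_eq_right h]
    exact hlt.trans_le (le_iSup₂ (f := fun (c : ℝ) (_ : 1 ≤ c ∧ (P₁ c ∧ P₂ c)) =>
      ENNReal.ofReal c) (min c₁ c₂) ⟨hmin1, hP1, hP2⟩)

end FinalCUB
theorem cUB_prod {G₁ : Type u} {G₂ : Type u}
    [Group G₁] [TopologicalSpace G₁] [IsTopologicalGroup G₁] [LocallyCompactSpace G₁]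
    [Group G₂] [TopologicalSpace G₂] [IsTopologicalGroup G₂] [LocallyCompactSpace G₂] :
    cUB.{u, v} (G₁ × G₂) = min (cUB.{u, v} G₁) (cUB.{u, v} G₂) := by
  by_cases hT1 : HasPropertyT.{u, v} G₁ 1
  · by_cases hT2 : HasPropertyT.{u, v} G₂ 1
    · have hTp : HasPropertyT.{u, v} (G₁ × G₂) 1 := hasPropertyT_prod le_rfl hT1 hT2
      have hiff : ∀ c : ℝ, (1 ≤ c ∧ HasPropertyT.{u, v} (G₁ × G₂) c) =
          (1 ≤ c ∧ (HasPropertyT.{u, v} G₁ c ∧ HasPropertyT.{u, v} G₂ c)) := by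
        intro c
        refine propext ⟨fun h => ⟨h.1, hasPropertyT_fst h.2, hasPropertyT_snd h.2⟩,
          fun h => ⟨h.1, hasPropertyT_prod h.1 h.2.1 h.2.2⟩⟩
      rw [show cUB.{u, v} (G₁ × G₂) =
          ⨆ (c : ℝ) (_ : 1 ≤ c ∧ HasPropertyT.{u, v} (G₁ × G₂) c), ENNReal.ofReal c from
        by rw [cUB, if_pos hTp],
        show cUB.{u, v} G₁ =
          ⨆ (c : ℝ) (_ : 1 ≤ c ∧ HasPropertyT.{u, v} G₁ c), ENNReal.ofReal c from
        by rw [cUB, if_pos hT1],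
        show cUB.{u, v} G₂ =
          ⨆ (c : ℝ) (_ : 1 ≤ c ∧ HasPropertyT.{u, v} G₂ c), ENNReal.ofReal c from
        by rw [cUB, if_pos hT2]]
      rw [show (⨆ (c : ℝ) (_ : 1 ≤ c ∧ HasPropertyT.{u, v} (G₁ × G₂) c), ENNReal.ofReal c) =
          ⨆ (c : ℝ) (_ : 1 ≤ c ∧ (HasPropertyT.{u, v} G₁ c ∧ HasPropertyT.{u, v} G₂ c)),
            ENNReal.ofReal c from iSup_congr fun c => by rw [hiff c]]
      exact iSup_min_aux
        (fun c c' h1 hle h => hasPropertyT_anti hle h)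
        (fun c c' h1 hle h => hasPropertyT_anti hle h)
    · have hTp : ¬ HasPropertyT.{u, v} (G₁ × G₂) 1 := fun h => hT2 (hasPropertyT_snd h)
      rw [show cUB.{u, v} (G₁ × G₂) = 1 from by rw [cUB, if_neg hTp],
        show cUB.{u, v} G₂ = 1 from by rw [cUB, if_neg hT2]]
      exact (min_eq_right (one_le_cUB G₁)).symm
  · have hTp : ¬ HasPropertyT.{u, v} (G₁ × G₂) 1 := fun h => hT1 (hasPropertyT_fst h)
    rw [show cUB.{u, v} (G₁ × G₂) = 1 from by rw [cUB, if_neg hTp],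
      show cUB.{u, v} G₁ = 1 from by rw [cUB, if_neg hT1]]
    exact (min_eq_left (one_le_cUB G₂)).symm
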